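/- (Real version of Stone's Theorem) Let H be a real Hilbert space and γ : ℝ → O(H) a strongly continuous one-parameter group of orthogonal operators (γ(s+t) = γ(s)γ(t), γ(0) = id, each γ(t) a surjective linear isometry, and t ↦ γ(t)v continuous for every v ∈ H). Let D ⊆ H be a dense linear subspace with γ(t)D ⊆ D for all t ∈ ℝ, consisting of C¹-vectors (for each v ∈ D the map t ↦ γ(t)v is continuously differentiable). Define the densely defined unbounded operator A with domain D by A v := (d/dt)|_{t=0} γ(t)v. Then A is essentially skew-adjoint: A is closable and its adjoint A* equals the negative of its closure, A* = −Ā. -/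

import Mathlib

set_option maxHeartbeats 1000000

open scoped RealInnerProductSpace


/-- Real version of Stone's Theorem: Let `γ` be a strongly continuous
one-parameter group of orthogonal operators on a real Hilbert space `H`, and let the domain
of the densely defined operator `A` be a dense, `γ(ℝ)`-invariant subspace consisting of
`C¹`-vectors, on which `A v = (d/dt)|₀ γ(t)v`. Then `A` is closable and `A* = -Ā`. -/
theorem real_stone_essentially_skewAdjoint
    {H : Type*} [NormedAddCommGroup H] [InnerProductSpace ℝ H] [CompleteSpace H]
    (γ : ℝ → H →L[ℝ] H)
    (hgrp : ∀ s t : ℝ, γ (s + t) = (γ s).comp (γ t))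
    (h0 : γ 0 = ContinuousLinearMap.id ℝ H)
    (hiso : ∀ (t : ℝ) (v : H), ‖γ t v‖ = ‖v‖)
    (hsurj : ∀ t : ℝ, Function.Surjective (γ t))
    (hcont : ∀ v : H, Continuous fun t : ℝ => γ t v)
    (A : H →ₗ.[ℝ] H)
    (hdense : Dense (A.domain : Set H))
    (hinv : ∀ (t : ℝ), ∀ v ∈ A.domain, γ t v ∈ A.domain)
    (hC1 : ∀ v ∈ A.domain, ContDiff ℝ 1 fun s : ℝ => γ s v)
    (hA : ∀ v : A.domain, A v = deriv (fun s : ℝ => γ s (v : H)) 0) :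
    A.IsClosable ∧ A.adjoint = -A.closure := by
  classical
  -- inner products are preserved
  have hinner : ∀ (t : ℝ) (u v : H), ⟪γ t u, γ t v⟫ = ⟪u, v⟫ := fun t u v =>
    (⟨(γ t).toLinearMap, hiso t⟩ : H →ₗᵢ[ℝ] H).inner_map_map u v
  -- derivative at 0
  have hD0 : ∀ v : A.domain, HasDerivAt (fun s : ℝ => γ s (v : H)) (A v) 0 := by
    intro v
    have hd : DifferentiableAt ℝ (fun s : ℝ => γ s (v : H)) 0 :=
      ((hC1 v v.2).differentiable one_ne_zero).differentiableAt
    rw [hA v]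
    exact hd.hasDerivAt
  -- derivative everywhere
  have hDt : ∀ (v : A.domain) (t : ℝ), HasDerivAt (fun s : ℝ => γ s (v : H)) (γ t (A v)) t := by
    intro v t
    have h1 : HasDerivAt (fun s : ℝ => γ t (γ s (v : H))) (γ t (A v)) 0 :=
      ((γ t).hasFDerivAt).comp_hasDerivAt 0 (hD0 v)
    have h2 : (fun s : ℝ => γ t (γ s (v : H))) = fun s : ℝ => γ (t + s) (v : H) := by
      funext s; rw [hgrp]; rfl
    rw [h2] at h1
    have h3 : HasDerivAt (fun s : ℝ => s - t) 1 t := by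
      simpa using (hasDerivAt_id t).sub_const t
    have h4 := h1.scomp_of_eq t h3 (by simp)
    have h5 : ((fun s : ℝ => γ (t + s) (v : H)) ∘ fun s : ℝ => s - t)
        = fun s : ℝ => γ s (v : H) := by
      funext s; simp [Function.comp]
    rw [h5] at h4
    simpa using h4
  -- A commutes with the group
  have hAt : ∀ (v : A.domain) (t : ℝ),
      A ⟨γ t (v : H), hinv t v v.2⟩ = γ t (A v) := by
    intro v t
    have h3 : HasDerivAt (fun s : ℝ => s + t) 1 0 := by
      simpa using (hasDerivAt_id (0 : ℝ)).add_const t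
    have h1 := (hDt v t).scomp_of_eq 0 h3 (by simp)
    have h4 : ((fun s : ℝ => γ s (v : H)) ∘ fun s : ℝ => s + t)
        = fun s : ℝ => γ s (γ t (v : H)) := by
      funext s
      show γ (s + t) (v : H) = _
      rw [hgrp]; rfl
    rw [h4] at h1
    rw [hA ⟨γ t (v : H), hinv t v v.2⟩]
    simpa using h1.deriv
  -- skew-symmetry on the domain
  have hskew : ∀ u v : A.domain, ⟪(A u : H), (v : H)⟫ + ⟪(u : H), (A v : H)⟫ = 0 := by
    intro u v
    have h1 := (hDt u 0).inner ℝ (hDt v 0)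
    simp only [h0, ContinuousLinearMap.coe_id', id] at h1
    have heq : (fun t : ℝ => ⟪γ t (u : H), γ t (v : H)⟫)
        = fun _ : ℝ => ⟪(u : H), (v : H)⟫ := funext fun t => hinner t u v
    rw [heq] at h1
    have h2 : HasDerivAt (fun _ : ℝ => ⟪(u : H), (v : H)⟫) 0 0 := hasDerivAt_const 0 _
    have h3 := h1.unique h2
    linarith [h3]
  -- skew-symmetry extends to the closure of the graph
  have hclosed_skew : ∀ p ∈ closure (A.graph : Set (H × H)), ∀ v : A.domain,
      ⟪p.2, (v : H)⟫ + ⟪p.1, (A v : H)⟫ = 0 := by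
    intro p hp v
    have hcl : IsClosed {q : H × H | ⟪q.2, (v : H)⟫ + ⟪q.1, (A v : H)⟫ = 0} :=
      isClosed_eq (((continuous_snd.inner continuous_const)).add
        ((continuous_fst.inner continuous_const))) continuous_const
    refine hcl.closure_subset_iff.2 ?_ hp
    rintro q hq
    rcases (LinearPMap.mem_graph_iff A).1 hq with ⟨w, hw1, hw2⟩
    simp only [Set.mem_setOf_eq, ← hw1, ← hw2]
    have := hskew w v
    linarith [this]
  -- A is closable
  have hcl : A.IsClosable := by
    refine ⟨(A.graph.topologicalClosure).toLinearPMap,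
      (Submodule.toLinearPMap_graph_eq _ ?_).symm⟩
    intro p hp hp1
    have hp' : p ∈ closure (A.graph : Set (H × H)) := by
      rw [← Submodule.topologicalClosure_coe]; exact hp
    have hz : p.2 = 0 := by
      refine hdense.eq_zero_of_inner_right ℝ fun v' hv' => ?_
      lift v' to A.domain using hv' with v
      have h := hclosed_skew p hp' v
      rw [hp1] at h
      simp only [inner_zero_left, add_zero] at h
      rw [real_inner_comm]; exact h
    exact hz
  have hgraph : A.closure.graph = A.graph.topologicalClosure :=
    (hcl.graph_closure_eq_closure_graph).symm
  -- kernel lemma: a vector "orthogonal" with eigenvalue relation must vanish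
  have hker : ∀ c : ℝ, c ≠ 0 → ∀ u : H,
      (∀ v : A.domain, ⟪(A v : H), u⟫ = c * ⟪(v : H), u⟫) → u = 0 := by
    intro c hc u hu
    refine hdense.eq_zero_of_inner_right ℝ fun v' hv' => ?_
    lift v' to A.domain using hv' with v
    set M : ℝ := ‖u‖ * ‖(v : H)‖ with hM
    have hMnn : 0 ≤ M := mul_nonneg (norm_nonneg _) (norm_nonneg _)
    set f : ℝ → ℝ := fun t => ⟪u, γ t (v : H)⟫ with hf
    have hfd : ∀ t, HasDerivAt f (c * f t) t := by
      intro t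
      have h2 := (hasDerivAt_const t u).inner ℝ (hDt v t)
      simp only [inner_zero_left, add_zero] at h2
      have h3 : ⟪u, γ t (A v : H)⟫ = c * f t := by
        have h4 := hu ⟨γ t (v : H), hinv t v v.2⟩
        rw [hAt v t] at h4
        simp only [hf]
        rw [real_inner_comm]
        rw [h4]
        rw [real_inner_comm]
      rw [h3] at h2
      exact h2
    have hbound : ∀ t, |f t| ≤ M := by
      intro t
      have := abs_real_inner_le_norm u (γ t (v : H))
      rwa [hiso t] at this
    -- solve the ODE
    have hgd : ∀ t, HasDerivAt (fun t => f t * Real.exp (-(c * t))) 0 t := by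
      intro t
      have hlin : HasDerivAt (fun t : ℝ => -(c * t)) (-c) t := by
        simpa using (hasDerivAt_id t).const_mul (-c)
      have hexp := hlin.exp
      have := (hfd t).mul hexp
      have heq : c * f t * Real.exp (-(c * t)) + f t * (Real.exp (-(c * t)) * -c) = 0 := by
        ring
      rwa [heq] at this
    have hconst : ∀ t : ℝ, f t * Real.exp (-(c * t)) = f 0 := by
      intro t
      have := is_const_of_deriv_eq_zero (f := fun t => f t * Real.exp (-(c * t)))
        (fun x => (hgd x).differentiableAt) (fun x => (hgd x).deriv) t 0
      simpa using this
    have hsol : ∀ t, f t = f 0 * Real.exp (c * t) := by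
      intro t
      have h := hconst t
      have : f t = f t * Real.exp (-(c * t)) * Real.exp (c * t) := by
        rw [mul_assoc, ← Real.exp_add]
        simp
      rw [this, h]
    have hf0 : f 0 = 0 := by
      by_contra hne
      have habs : 0 < |f 0| := abs_pos.2 hne
      set t : ℝ := Real.log (M / |f 0| + 1) / c with ht
      have hct : c * t = Real.log (M / |f 0| + 1) := by
        rw [ht, mul_div_assoc', mul_div_cancel_left₀ _ hc]
      have hpos : 0 < M / |f 0| + 1 := by positivity
      have h1 : |f t| = |f 0| * (M / |f 0| + 1) := by
        rw [hsol t, abs_mul, hct, Real.exp_log hpos, abs_of_pos hpos]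
      have h2 : |f 0| * (M / |f 0| + 1) = M + |f 0| := by
        field_simp
      have := hbound t
      rw [h1, h2] at this
      linarith
    have : ⟪u, (v : H)⟫ = 0 := by
      have : f 0 = ⟪u, (v : H)⟫ := by simp [hf, h0]
      linarith [hf0, this]
    rw [real_inner_comm]; exact this
  -- orthogonality on the closure of the graph
  have hgorth : ∀ p ∈ closure (A.graph : Set (H × H)), ⟪p.1, p.2⟫ = (0 : ℝ) := by
    intro p hp
    have hcl : IsClosed {q : H × H | ⟪q.1, q.2⟫ = (0 : ℝ)} :=
      isClosed_eq (continuous_fst.inner continuous_snd) continuous_const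
    refine hcl.closure_subset_iff.2 ?_ hp
    rintro q hq
    rcases (LinearPMap.mem_graph_iff A).1 hq with ⟨w, hw1, hw2⟩
    simp only [Set.mem_setOf_eq, ← hw1, ← hw2]
    have h1 := hskew w w
    have h2 : ⟪(A w : H), (w : H)⟫ = ⟪(w : H), (A w : H)⟫ := real_inner_comm _ _
    linarith
  -- surjectivity of 1 - closure of A
  have hsurjG : ∀ z : H, ∃ p : H × H,
      p ∈ closure (A.graph : Set (H × H)) ∧ p.1 - p.2 = z := by
    have hGcclosed : IsClosed ((A.graph.topologicalClosure : Submodule ℝ (H × H)) : Set (H × H)) :=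
      A.graph.isClosed_topologicalClosure
    haveI : CompleteSpace A.graph.topologicalClosure := hGcclosed.completeSpace_coe
    set Φ : (H × H) →L[ℝ] H :=
      ContinuousLinearMap.fst ℝ H H - ContinuousLinearMap.snd ℝ H H with hΦ
    have hΦapp : ∀ q : H × H, Φ q = q.1 - q.2 := fun q => by
      simp [hΦ]
    set f : A.graph.topologicalClosure → H := fun p => Φ p.val with hfdef
    have hlow : ∀ q : H × H, q ∈ A.graph.topologicalClosure → ‖q‖ ≤ ‖Φ q‖ := by
      intro q hq
      have hq' : q ∈ closure (A.graph : Set (H × H)) := by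
        rw [← Submodule.topologicalClosure_coe]; exact hq
      have h00 : ⟪q.1, q.2⟫ = (0 : ℝ) := hgorth q hq'
      have h1 : ‖Φ q‖ ^ 2 = ‖q.1‖ ^ 2 + ‖q.2‖ ^ 2 := by
        rw [hΦapp, norm_sub_sq_real, h00]; ring
      have h2 : ‖q‖ = max ‖q.1‖ ‖q.2‖ := Prod.norm_def q
      have h3 : ‖q‖ ^ 2 ≤ ‖Φ q‖ ^ 2 := by
        rw [h1, h2]
        rcases max_cases ‖q.1‖ ‖q.2‖ with ⟨hm, _⟩ | ⟨hm, _⟩ <;> rw [hm] <;>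
          nlinarith [norm_nonneg q.1, norm_nonneg q.2]
      nlinarith [norm_nonneg q, norm_nonneg (Φ q)]
    have hanti : AntilipschitzWith 1 f := by
      refine AntilipschitzWith.of_le_mul_dist fun p q => ?_
      rw [Subtype.dist_eq, dist_eq_norm, dist_eq_norm, NNReal.coe_one, one_mul]
      have hsub : f p - f q = Φ (p.val - q.val) := by
        simp [hfdef, map_sub]
      rw [hsub]
      exact hlow (p.val - q.val) (A.graph.topologicalClosure.sub_mem p.2 q.2)
    have hfc : UniformContinuous f :=
      Φ.uniformContinuous.comp uniformContinuous_subtype_val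
    have hclosedrange : IsClosed (Set.range f) := hanti.isClosed_range hfc
    set W : Submodule ℝ H := A.graph.map (LinearMap.fst ℝ H H - LinearMap.snd ℝ H H) with hW
    have hWsub : (W : Set H) ⊆ Set.range f := by
      rintro w hw
      rcases Submodule.mem_map.1 hw with ⟨q, hq, rfl⟩
      exact ⟨⟨q, A.graph.le_topologicalClosure hq⟩, rfl⟩
    have hWdense : W.topologicalClosure = ⊤ := by
      rw [Submodule.topologicalClosure_eq_top_iff, Submodule.eq_bot_iff]
      intro u hu
      refine hker 1 one_ne_zero u fun v => ?_
      have hv : ((v : H), (A v : H)) ∈ A.graph := A.mem_graph v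
      have hw : ((v : H) - (A v : H)) ∈ W := Submodule.mem_map.2 ⟨((v : H), (A v : H)), hv, rfl⟩
      have h := (Submodule.mem_orthogonal W u).1 hu _ hw
      rw [inner_sub_left] at h
      linarith
    intro z
    have hz : z ∈ Set.range f := by
      have h1 : z ∈ closure (W : Set H) := by
        rw [← Submodule.topologicalClosure_coe, hWdense]
        simp
      have h2 : z ∈ closure (Set.range f) := closure_mono hWsub h1
      rwa [hclosedrange.closure_eq] at h2
    rcases hz with ⟨p, hp⟩
    refine ⟨p.val, ?_, ?_⟩
    · rw [← Submodule.topologicalClosure_coe]; exact p.2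
    · rw [← hΦapp]; exact hp
  -- skew-symmetry against the closure
  have hAd : ∀ x : A.closure.domain, ∀ v : A.domain,
      ⟪(A.closure x : H), (v : H)⟫ + ⟪(x : H), (A v : H)⟫ = 0 := by
    intro x v
    have hm : ((x : H), A.closure x) ∈ closure (A.graph : Set (H × H)) := by
      rw [← Submodule.topologicalClosure_coe, ← hgraph]
      exact A.closure.mem_graph x
    exact hclosed_skew _ hm v
  -- first direction : -Ā ≤ A†
  have hd1 : -A.closure ≤ A.adjoint := by
    constructor
    · intro x hx
      rw [LinearPMap.neg_domain] at hx
      apply LinearPMap.mem_adjoint_domain_of_exists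
      refine ⟨-(A.closure ⟨x, hx⟩), fun v => ?_⟩
      have h := hAd ⟨x, hx⟩ v
      rw [inner_neg_left]
      linarith
    · rintro x y hxy
      refine (LinearPMap.adjoint_apply_eq hdense y fun v => ?_).symm
      rw [LinearPMap.neg_apply, inner_neg_left, ← hxy]
      have h := hAd x v
      linarith
  -- second direction : A† ≤ -Ā, via the key graph membership
  have key : ∀ u : A.adjoint.domain,
      ((u : H), -(A.adjoint u : H)) ∈ A.closure.graph := by
    intro u
    obtain ⟨p, hp, hpz⟩ := hsurjG ((u : H) + (A.adjoint u : H))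
    have hpgraph : p ∈ A.closure.graph := by
      rw [hgraph]
      rw [← Submodule.topologicalClosure_coe] at hp
      exact hp
    set w : H := (A.adjoint u : H) with hwdef
    have hp1 : p.1 = (u : H) + w + p.2 := by
      rw [← hpz]; abel
    have he : (u : H) - p.1 = 0 := by
      refine hker (-1) (by norm_num) _ fun v => ?_
      have f1 : ⟪(A v : H), (u : H)⟫ = ⟪(v : H), w⟫ := by
        have h := LinearPMap.adjoint_isFormalAdjoint hdense u v
        calc ⟪(A v : H), (u : H)⟫ = ⟪(u : H), (A v : H)⟫ := real_inner_comm _ _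
          _ = ⟪w, (v : H)⟫ := h.symm
          _ = ⟪(v : H), w⟫ := real_inner_comm _ _
      have f2 : ⟪(A v : H), p.1⟫ = -⟪(v : H), p.2⟫ := by
        have h2 := hclosed_skew p hp v
        have c1 : ⟪(A v : H), p.1⟫ = ⟪p.1, (A v : H)⟫ := real_inner_comm _ _
        have c2 : ⟪p.2, (v : H)⟫ = ⟪(v : H), p.2⟫ := real_inner_comm _ _
        linarith
      have f3 : ⟪(v : H), p.1⟫ = ⟪(v : H), (u : H)⟫ + ⟪(v : H), w⟫ + ⟪(v : H), p.2⟫ := by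
        rw [hp1, inner_add_right, inner_add_right]
      rw [inner_sub_right, inner_sub_right]
      linarith
    have hu1 : (u : H) = p.1 := sub_eq_zero.1 he
    have hp2 : p.2 = -w := by
      have : p.2 = p.1 - ((u : H) + w) := by rw [← hpz]; abel
      rw [this, ← hu1]; abel
    have : ((u : H), -w) = p := by
      ext
      · exact hu1
      · exact hp2.symm
    rw [this]
    exact hpgraph
  have hd2 : A.adjoint ≤ -A.closure := by
    constructor
    · intro x hx
      rw [LinearPMap.neg_domain]
      exact A.closure.mem_domain_of_mem_graph (key ⟨x, hx⟩)
    · rintro x y hxy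
      have hk := key x
      rw [hxy] at hk
      have hy2 : (y : H) ∈ A.closure.domain := y.2
      have hy : -(A.adjoint x : H) = A.closure ⟨(y : H), hy2⟩ :=
        (LinearPMap.image_iff hy2).2 hk
      rw [LinearPMap.neg_apply]
      rw [show A.closure y = -(A.adjoint x : H) from hy.symm, neg_neg]
  exact ⟨hcl, le_antisymm hd2 hd1⟩
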